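/- Every t-matrix admits a tensor singular value decomposition (TSVD): for every X ∈ C^{D₁×D₂}, setting Q = min(D₁, D₂), there exist t-matrices U ∈ C^{D₁×Q}, V ∈ C^{D₂×Q} and nonnegative t-scalars λ₁,…,λ_Q such that X = U ∘ diag(λ₁,…,λ_Q) ∘ Vᴴ, Uᴴ ∘ U = Vᴴ ∘ V = I (the Q×Q identity t-matrix), and F(λ₁)(i) ≥ F(λ₂)(i) ≥ ⋯ ≥ F(λ_Q)(i) ≥ 0 for every i ∈ G. -/

import Mathlib

open scoped BigOperators
open scoped Classical

noncomputable section

variable {N : ℕ}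

/-- The underlying group `G = ZMod I₁ × ⋯ × ZMod I_N`. -/
abbrev G (I : Fin N → ℕ) : Type := ∀ n : Fin N, ZMod (I n)

/-- A t-scalar is a function `G → ℂ`. -/
abbrev TS (I : Fin N → ℕ) : Type := G I → ℂ

variable {I : Fin N → ℕ} [∀ n, NeZero (I n)]

/-- Circular convolution product of t-scalars. -/
def tconv (X Y : TS I) : TS I := fun i => ∑ j, X (i - j) * Y j

/-- The zero t-scalar. -/
def ZT : TS I := fun _ => 0

/-- The identity t-scalar: the indicator function of `0 ∈ G`. -/
def ET : TS I := fun i => if i = 0 then 1 else 0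

/-- The Fourier transform of a t-scalar:
`F(X)(i) = Σ_j X(j)·exp(2π√−1·Σ_n i_n·j_n / I_n)`. -/
def tfourier (X : TS I) : TS I :=
  fun i => ∑ j, X j * Complex.exp (2 * Real.pi * Complex.I *
      ∑ n, ((i n).val : ℂ) * ((j n).val : ℂ) / ((I n : ℕ) : ℂ))

/-- Conjugate of a t-scalar: `conj(X)(i) = complex conjugate of X(−i)`. -/
def tconj (X : TS I) : TS I := fun i => starRingEnd ℂ (X (-i))

/-- A t-scalar is self-conjugate if `X = conj(X)`. -/
def SelfConj (X : TS I) : Prop := X = tconj X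

/-- Real part `Re(X) = 2⁻¹(X + conj X)` of a t-scalar. -/
def tRe (X : TS I) : TS I := fun i => (X i + tconj X i) / 2

/-- Imaginary part `Im(X) = (2√−1)⁻¹(X − conj X)` of a t-scalar. -/
def tIm (X : TS I) : TS I := fun i => (X i - tconj X i) / (2 * Complex.I)

/-- A t-scalar is nonnegative if it is `Y ∘ Y` for some self-conjugate `Y`. -/
def TNonneg (X : TS I) : Prop := ∃ Y : TS I, SelfConj Y ∧ X = tconv Y Y

/-- A t-scalar is invertible if `X ∘ Y = E_T` for some `Y`. -/
def TInv (X : TS I) : Prop := ∃ Y : TS I, tconv X Y = ET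

/-- t-matrix multiplication: entrywise convolution products. -/
def tmul {a b c : ℕ} (A : Matrix (Fin a) (Fin b) (TS I)) (B : Matrix (Fin b) (Fin c) (TS I)) :
    Matrix (Fin a) (Fin c) (TS I) :=
  Matrix.of fun α γ => ∑ β, tconv (A α β) (B β γ)

/-- Conjugate transpose of a t-matrix. -/
def htrans {a b : ℕ} (A : Matrix (Fin a) (Fin b) (TS I)) : Matrix (Fin b) (Fin a) (TS I) :=
  Matrix.of fun β α => tconj (A α β)

/-- The identity t-matrix. -/
def tId (Q : ℕ) : Matrix (Fin Q) (Fin Q) (TS I) :=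
  Matrix.of fun α β => if α = β then ET else ZT

/-- Diagonal t-matrix with the given t-scalar diagonal entries. -/
def tdiag {Q : ℕ} (lam : Fin Q → TS I) : Matrix (Fin Q) (Fin Q) (TS I) :=
  Matrix.of fun k l => if k = l then lam k else ZT

/-- The `i`-th Fourier fslice of a t-matrix. -/
def fslice {a b : ℕ} (A : Matrix (Fin a) (Fin b) (TS I)) (i : G I) :
    Matrix (Fin a) (Fin b) ℂ :=
  Matrix.of fun α β => tfourier (A α β) i

/-- Frobenius norm of a complex matrix. -/
def frob {a b : ℕ} (M : Matrix (Fin a) (Fin b) ℂ) : ℝ :=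
  Real.sqrt (∑ α, ∑ β, Complex.normSq (M α β))
section FourierMachinery

variable {N : ℕ} {I : Fin N → ℕ} [∀ n, NeZero (I n)]

/-- The pairing character on `G I`. -/
def ch (i j : G I) : ℂ := ∏ n, ZMod.stdAddChar (i n * j n)

lemma stdAddChar_conj {m : ℕ} [NeZero m] (x : ZMod m) :
    (starRingEnd ℂ) (ZMod.stdAddChar x) = ZMod.stdAddChar (-x) := by
  have h1 : x = ((x.val : ℤ) : ZMod m) := by push_cast [ZMod.natCast_zmod_val]; rfl
  rw [h1, ← Int.cast_neg, ZMod.stdAddChar_coe, ZMod.stdAddChar_coe, ← Complex.exp_conj]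
  simp only [map_div₀, map_mul, Complex.conj_I, map_ofNat, Complex.conj_ofReal,
    map_intCast, map_natCast]
  push_cast
  ring_nf

lemma ch_comm (i j : G I) : ch i j = ch j i := by
  simp [ch, mul_comm]

lemma ch_add_left (i i' j : G I) : ch (i + i') j = ch i j * ch i' j := by
  simp [ch, Pi.add_apply, add_mul, AddChar.map_add_eq_mul, Finset.prod_mul_distrib]

lemma ch_add_right (i j j' : G I) : ch i (j + j') = ch i j * ch i j' := by
  simp [ch, Pi.add_apply, mul_add, AddChar.map_add_eq_mul, Finset.prod_mul_distrib]

lemma ch_zero_left (j : G I) : ch (0 : G I) j = 1 := by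
  simp [ch]

lemma ch_zero_right (i : G I) : ch i (0 : G I) = 1 := by
  simp [ch]

lemma ch_neg_swap (i j : G I) : ch i (-j) = ch (-i) j := by
  simp [ch, Pi.neg_apply, neg_mul, mul_neg]

lemma ch_conj (i j : G I) : (starRingEnd ℂ) (ch i j) = ch i (-j) := by
  simp [ch, map_prod, stdAddChar_conj, Pi.neg_apply, mul_neg]

lemma ch_sum (i : G I) :
    ∑ j : G I, ch i j = if i = 0 then (Fintype.card (G I) : ℂ) else 0 := by
  classical
  have hsplit : ∑ j : G I, ch i j = ∏ n, ∑ x : ZMod (I n), ZMod.stdAddChar (i n * x) := by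
    rw [Finset.prod_univ_sum]
    rw [Fintype.piFinset_univ]
    rfl
  have hn : ∀ n, ∑ x : ZMod (I n), ZMod.stdAddChar (i n * x)
      = if i n = 0 then ((I n : ℕ) : ℂ) else 0 := by
    intro n
    split_ifs with h
    · simp [h, ZMod.card]
    · have := AddChar.sum_eq_zero_of_ne_one (ZMod.isPrimitive_stdAddChar (I n) h)
      simpa [AddChar.mulShift_apply] using this
  rw [hsplit]
  simp_rw [hn]
  by_cases h : i = 0
  · simp [h, Fintype.card_pi, ZMod.card]
  · rw [if_neg h]
    obtain ⟨n, hn0⟩ : ∃ n, i n ≠ 0 := by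
      by_contra hc
      push_neg at hc
      exact h (funext hc)
    exact Finset.prod_eq_zero (Finset.mem_univ n) (if_neg hn0)

end FourierMachinery
section FourierMachinery2

variable {N : ℕ} {I : Fin N → ℕ} [∀ n, NeZero (I n)]

lemma tfourier_eq (X : TS I) (i : G I) : tfourier X i = ∑ j, X j * ch i j := by
  unfold tfourier
  refine Finset.sum_congr rfl fun j _ => ?_
  congr 1
  rw [Finset.mul_sum, Complex.exp_sum, ch]
  refine Finset.prod_congr rfl fun n _ => ?_
  have hx : (i n * j n) = ((((i n).val * (j n).val : ℕ) : ℤ) : ZMod (I n)) := by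
    push_cast [ZMod.natCast_zmod_val]
    rfl
  rw [hx, ZMod.stdAddChar_coe]
  congr 1
  push_cast
  ring

lemma card_G_ne_zero : (Fintype.card (G I) : ℂ) ≠ 0 := by
  exact_mod_cast Fintype.card_ne_zero

/-- Inverse Fourier transform. -/
def tifourier (g : TS I) : TS I :=
  fun j => (Fintype.card (G I) : ℂ)⁻¹ * ∑ i, g i * ch i (-j)

lemma ch_pair_sum (i k : G I) :
    ∑ j : G I, ch k (-j) * ch i j = if i = k then (Fintype.card (G I) : ℂ) else 0 := by
  have h : ∀ j, ch k (-j) * ch i j = ch (i - k) j := by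
    intro j
    rw [ch_neg_swap, sub_eq_add_neg, add_comm, ch_add_left]
  simp_rw [h]
  rw [ch_sum]
  simp [sub_eq_zero]

lemma tfourier_tifourier (g : TS I) : tfourier (tifourier g) = g := by
  funext i
  rw [tfourier_eq]
  simp only [tifourier]
  calc ∑ j, ((Fintype.card (G I) : ℂ)⁻¹ * ∑ k, g k * ch k (-j)) * ch i j
      = (Fintype.card (G I) : ℂ)⁻¹ * ∑ k, g k * ∑ j, ch k (-j) * ch i j := by
        rw [Finset.mul_sum]
        simp_rw [Finset.mul_sum, Finset.sum_mul]
        rw [Finset.sum_comm]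
        refine Finset.sum_congr rfl fun k _ => Finset.sum_congr rfl fun j _ => ?_
        ring
    _ = g i := by
        simp_rw [ch_pair_sum, mul_ite, mul_zero]
        rw [Finset.sum_ite_eq Finset.univ i (fun k => g k * (Fintype.card (G I) : ℂ))]
        rw [if_pos (Finset.mem_univ i), mul_comm (g i)]
        rw [inv_mul_cancel_left₀ card_G_ne_zero]

lemma tifourier_tfourier (X : TS I) : tifourier (tfourier X) = X := by
  funext j
  simp only [tifourier]
  simp_rw [tfourier_eq]
  calc (Fintype.card (G I) : ℂ)⁻¹ * ∑ i, (∑ k, X k * ch i k) * ch i (-j)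
      = (Fintype.card (G I) : ℂ)⁻¹ * ∑ k, X k * ∑ i, ch j (-i) * ch k i := by
        congr 1
        simp_rw [Finset.sum_mul]
        rw [Finset.sum_comm]
        refine Finset.sum_congr rfl fun k _ => ?_
        rw [Finset.mul_sum]
        refine Finset.sum_congr rfl fun i _ => ?_
        rw [ch_neg_swap j i, ch_comm (-j) i, ch_comm k i]
        ring
    _ = X j := by
        simp_rw [ch_pair_sum, mul_ite, mul_zero]
        rw [Finset.sum_ite_eq' Finset.univ j (fun k => X k * (Fintype.card (G I) : ℂ))]
        rw [if_pos (Finset.mem_univ j), mul_comm (X j)]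
        rw [inv_mul_cancel_left₀ card_G_ne_zero]

lemma tfourier_injective : Function.Injective (tfourier (I := I)) := by
  intro X Y h
  have := congrArg tifourier h
  rwa [tifourier_tfourier, tifourier_tfourier] at this

lemma tfourier_tconv (X Y : TS I) (i : G I) :
    tfourier (tconv X Y) i = tfourier X i * tfourier Y i := by
  simp_rw [tfourier_eq]
  unfold tconv
  rw [Finset.sum_mul_sum]
  simp_rw [Finset.sum_mul]
  rw [Finset.sum_comm]
  conv_rhs => rw [Finset.sum_comm]
  refine Finset.sum_congr rfl fun m _ => ?_
  rw [← Equiv.sum_comp (Equiv.addRight m) (fun j => X (j - m) * Y m * ch i j)]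
  refine Finset.sum_congr rfl fun j _ => ?_
  simp only [Equiv.coe_addRight]
  rw [add_sub_cancel_right, ch_add_right]
  ring

lemma tfourier_tconj (X : TS I) (i : G I) :
    tfourier (tconj X) i = (starRingEnd ℂ) (tfourier X i) := by
  simp_rw [tfourier_eq]
  rw [map_sum]
  rw [← Equiv.sum_comp (Equiv.neg (G I)) (fun j => tconj X j * ch i j)]
  refine Finset.sum_congr rfl fun j _ => ?_
  simp only [Equiv.neg_apply, tconj, neg_neg]
  rw [map_mul, ch_conj]

lemma tfourier_ET (i : G I) : tfourier (ET : TS I) i = 1 := by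
  rw [tfourier_eq]
  unfold ET
  simp [ch_zero_right]

lemma tfourier_ZT (i : G I) : tfourier (ZT : TS I) i = 0 := by
  rw [tfourier_eq]
  unfold ZT
  simp

lemma tfourier_finsum {κ : Type*} (s : Finset κ) (g : κ → TS I) (i : G I) :
    tfourier (∑ b ∈ s, g b) i = ∑ b ∈ s, tfourier (g b) i := by
  simp_rw [tfourier_eq, Finset.sum_apply, Finset.sum_mul]
  rw [Finset.sum_comm]

lemma TNonneg_of (X : TS I) (r : G I → ℝ) (h : ∀ i, tfourier X i = ((r i : ℝ) : ℂ))
    (hr : ∀ i, 0 ≤ r i) : TNonneg X := by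
  set Y : TS I := tifourier (fun i => ((Real.sqrt (r i) : ℝ) : ℂ)) with hY
  have hFY : ∀ i, tfourier Y i = ((Real.sqrt (r i) : ℝ) : ℂ) := by
    intro i
    rw [hY, tfourier_tifourier]
  refine ⟨Y, ?_, ?_⟩
  · apply tfourier_injective
    funext i
    rw [tfourier_tconj, hFY, Complex.conj_ofReal]
  · apply tfourier_injective
    funext i
    rw [tfourier_tconv, hFY, h]
    rw [← Complex.ofReal_mul, Real.mul_self_sqrt (hr i)]

end FourierMachinery2
section SliceMachinery

open Matrix

variable {N : ℕ} {I : Fin N → ℕ} [∀ n, NeZero (I n)]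

lemma fslice_tmul {a b c : ℕ} (A : Matrix (Fin a) (Fin b) (TS I))
    (B : Matrix (Fin b) (Fin c) (TS I)) (i : G I) :
    fslice (tmul A B) i = fslice A i * fslice B i := by
  ext α γ
  simp only [fslice, tmul, Matrix.of_apply, Matrix.mul_apply]
  rw [tfourier_finsum]
  exact Finset.sum_congr rfl fun β _ => tfourier_tconv _ _ _

lemma fslice_htrans {a b : ℕ} (A : Matrix (Fin a) (Fin b) (TS I)) (i : G I) :
    fslice (htrans A) i = (fslice A i)ᴴ := by
  ext β α
  simp only [fslice, htrans, Matrix.of_apply, Matrix.conjTranspose_apply]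
  exact tfourier_tconj _ _

lemma fslice_tId {Q : ℕ} (i : G I) : fslice (tId Q : Matrix (Fin Q) (Fin Q) (TS I)) i = 1 := by
  ext k l
  simp only [fslice, tId, Matrix.of_apply, Matrix.one_apply]
  split_ifs with h
  · exact tfourier_ET i
  · exact tfourier_ZT i

lemma fslice_tdiag {Q : ℕ} (lam : Fin Q → TS I) (i : G I) :
    fslice (tdiag lam) i = Matrix.diagonal (fun k => tfourier (lam k) i) := by
  ext k l
  simp only [fslice, tdiag, Matrix.of_apply, Matrix.diagonal_apply]
  split_ifs with h
  · rfl
  · exact tfourier_ZT i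

lemma fslice_injective {a b : ℕ} (A B : Matrix (Fin a) (Fin b) (TS I))
    (h : ∀ i, fslice A i = fslice B i) : A = B := by
  refine Matrix.ext fun α β => ?_
  apply tfourier_injective
  funext i
  exact Matrix.ext_iff.mpr (h i) α β

/-- Build a t-matrix with prescribed Fourier slices. -/
def mslice {a b : ℕ} (M : G I → Matrix (Fin a) (Fin b) ℂ) : Matrix (Fin a) (Fin b) (TS I) :=
  Matrix.of fun α β => tifourier (fun i => M i α β)

lemma fslice_mslice {a b : ℕ} (M : G I → Matrix (Fin a) (Fin b) ℂ) (i : G I) :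
    fslice (mslice M) i = M i := by
  ext α β
  simp only [fslice, mslice, Matrix.of_apply]
  exact congrFun (tfourier_tifourier (fun i => M i α β)) i

end SliceMachinery
section SVDsection

open Matrix
open scoped ComplexOrder

lemma svd_tall {D₁ D₂ : ℕ} (hD : D₂ ≤ D₁) (M : Matrix (Fin D₁) (Fin D₂) ℂ) :
    ∃ (U : Matrix (Fin D₁) (Fin D₂) ℂ) (V : Matrix (Fin D₂) (Fin D₂) ℂ) (σ : Fin D₂ → ℝ),
      M = U * Matrix.diagonal (fun k => ((σ k : ℝ) : ℂ)) * Vᴴ ∧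
      Uᴴ * U = 1 ∧ Vᴴ * V = 1 ∧ Antitone σ ∧ ∀ k, 0 ≤ σ k := by
  classical
  have hps : (Mᴴ * M).PosSemidef := Matrix.posSemidef_conjTranspose_mul_self M
  have hA : (Mᴴ * M).IsHermitian := hps.isHermitian
  set μ : Fin D₂ → ℝ := hA.eigenvalues with hμdef
  have hμ : ∀ k, 0 ≤ μ k := hps.eigenvalues_nonneg
  set p : Equiv.Perm (Fin D₂) := Fin.revPerm.trans (Tuple.sort μ) with hpdef
  have hanti : Antitone (fun k => μ (p k)) := by
    intro a b hab
    have h1 : Fin.rev b ≤ Fin.rev a := Fin.rev_le_rev.mpr hab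
    have h2 := Tuple.monotone_sort μ h1
    simpa [hpdef, Equiv.trans_apply, Function.comp] using h2
  set σ : Fin D₂ → ℝ := fun k => Real.sqrt (μ (p k)) with hσdef
  have hσ0 : ∀ k, 0 ≤ σ k := fun k => Real.sqrt_nonneg _
  have hσanti : Antitone σ := fun a b hab => Real.sqrt_le_sqrt (hanti hab)
  have hσsq : ∀ k, (σ k : ℝ) * σ k = μ (p k) := fun k => Real.mul_self_sqrt (hμ _)
  set W : Matrix (Fin D₂) (Fin D₂) ℂ := (hA.eigenvectorUnitary : Matrix (Fin D₂) (Fin D₂) ℂ)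
    with hWdef
  set v : Fin D₂ → (Fin D₂ → ℂ) := fun k α => W α (p k) with hvdef
  have hvW : ∀ k, v k = ⇑(hA.eigenvectorBasis (p k)) :=
    fun k => funext fun α => hA.eigenvectorUnitary_apply α (p k)
  have hW : Wᴴ * W = 1 := by
    have h1 : W ∈ Matrix.unitaryGroup (Fin D₂) ℂ := (hA.eigenvectorUnitary).2
    rw [Matrix.mem_unitaryGroup_iff'] at h1
    rw [← Matrix.star_eq_conjTranspose]
    exact h1
  have hAv : ∀ k, (Mᴴ * M) *ᵥ v k = ((μ (p k) : ℝ) : ℂ) • v k := by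
    intro k
    have h2 := hA.mulVec_eigenvectorBasis (p k)
    rw [← hvW k] at h2
    funext α
    have h3 := congrFun h2 α
    simpa [Pi.smul_apply, Complex.real_smul] using h3
  have hdot : ∀ j k, dotProduct (star (v j)) (v k) = if j = k then 1 else 0 := by
    intro j k
    have h2 : (Wᴴ * W) (p j) (p k) = (1 : Matrix (Fin D₂) (Fin D₂) ℂ) (p j) (p k) := by rw [hW]
    rw [Matrix.mul_apply, Matrix.one_apply] at h2
    simp only [Matrix.conjTranspose_apply, EmbeddingLike.apply_eq_iff_eq] at h2
    simpa [dotProduct, hvdef, Pi.star_apply, RCLike.star_def] using h2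
  set V : Matrix (Fin D₂) (Fin D₂) ℂ := W.submatrix id ⇑p with hVdef
  have hV : Vᴴ * V = 1 := by
    calc Vᴴ * V
        = Wᴴ.submatrix ⇑p ⇑(Equiv.refl (Fin D₂)) * W.submatrix ⇑(Equiv.refl (Fin D₂)) ⇑p := by
          rw [hVdef, Matrix.conjTranspose_submatrix]
          rfl
      _ = (Wᴴ * W).submatrix ⇑p ⇑p := Matrix.submatrix_mul_equiv _ _ _ _ _
      _ = 1 := by rw [hW, Matrix.submatrix_one_equiv]
  have hMvMv : ∀ j k, dotProduct (star (M *ᵥ v j)) (M *ᵥ v k)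
      = ((μ (p k) : ℝ) : ℂ) * (if j = k then 1 else 0) := by
    intro j k
    rw [Matrix.star_mulVec, ← Matrix.dotProduct_mulVec, Matrix.mulVec_mulVec, hAv k,
      dotProduct_smul, hdot, smul_eq_mul]
  have hMv0 : ∀ k, σ k = 0 → M *ᵥ v k = 0 := by
    intro k hk
    have h2 := hMvMv k k
    rw [if_pos rfl, mul_one] at h2
    have h3 : μ (p k) = 0 := by rw [← hσsq k, hk, mul_zero]
    rw [h3] at h2
    push_cast at h2
    exact dotProduct_star_self_eq_zero.mp h2
  -- orthonormal family of left singular vectors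
  set uvec : Fin D₂ → EuclideanSpace ℂ (Fin D₁) :=
    fun k => ((σ k : ℂ))⁻¹ • (WithLp.equiv 2 (Fin D₁ → ℂ)).symm (M *ᵥ v k) with huvec
  have base : ∀ x y : Fin D₁ → ℂ,
      (inner ℂ ((WithLp.equiv 2 (Fin D₁ → ℂ)).symm x) ((WithLp.equiv 2 (Fin D₁ → ℂ)).symm y) : ℂ)
        = dotProduct (star x) y := by
    intro x y
    rw [EuclideanSpace.inner_eq_star_dotProduct]
    simp [dotProduct_comm]
  have hinner_u : ∀ j k, (inner ℂ (uvec j) (uvec k) : ℂ)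
      = (starRingEnd ℂ) ((σ j : ℂ))⁻¹ * (((σ k : ℂ))⁻¹
          * (((μ (p k) : ℝ) : ℂ) * if j = k then 1 else 0)) := by
    intro j k
    rw [huvec]
    simp only [inner_smul_left, inner_smul_right]
    rw [base, hMvMv]
    ring
  set s : Set (Fin D₁) := {α : Fin D₁ | ∃ h : (α : ℕ) < D₂, σ ⟨(α : ℕ), h⟩ ≠ 0} with hsdef
  set w : Fin D₁ → EuclideanSpace ℂ (Fin D₁) :=
    fun α => if h : (α : ℕ) < D₂ then uvec ⟨(α : ℕ), h⟩ else 0 with hwdef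
  have horth : Orthonormal ℂ (s.restrict w) := by
    rw [orthonormal_iff_ite]
    rintro ⟨a, ha1, ha2⟩ ⟨c, hc1, hc2⟩
    change (inner ℂ (w a) (w c) : ℂ) = _
    have hwa : w a = uvec ⟨(a : ℕ), ha1⟩ := dif_pos ha1
    have hwc : w c = uvec ⟨(c : ℕ), hc1⟩ := dif_pos hc1
    rw [hwa, hwc, hinner_u]
    by_cases hac : a = c
    · subst hac
      rw [if_pos rfl, if_pos rfl, mul_one]
      have hne : ((σ ⟨(a : ℕ), ha1⟩ : ℝ) : ℂ) ≠ 0 := Complex.ofReal_ne_zero.mpr ha2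
      rw [← hσsq ⟨(a : ℕ), ha1⟩]
      rw [map_inv₀, Complex.conj_ofReal]
      push_cast
      field_simp
    · have h1 : (⟨(a : ℕ), ha1⟩ : Fin D₂) ≠ ⟨(c : ℕ), hc1⟩ := by
        intro hcon
        exact hac (Fin.ext (by simpa using congrArg Fin.val hcon))
      have h2 : (⟨a, ⟨ha1, ha2⟩⟩ : s) ≠ ⟨c, ⟨hc1, hc2⟩⟩ := by
        intro hcon
        exact hac (by simpa using congrArg Subtype.val hcon)
      rw [if_neg h1, if_neg h2, mul_zero, mul_zero, mul_zero]
  obtain ⟨b, hb⟩ := horth.exists_orthonormalBasis_extension_of_card_eq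
    (by simp [finrank_euclideanSpace])
  set bfun : Fin D₁ → (Fin D₁ → ℂ) := fun t => (WithLp.equiv 2 (Fin D₁ → ℂ)) (b t) with hbfun
  have hbdot : ∀ t t', dotProduct (star (bfun t)) (bfun t') = if t = t' then 1 else 0 := by
    intro t t'
    have h2 := orthonormal_iff_ite.mp b.orthonormal t t'
    rw [EuclideanSpace.inner_eq_star_dotProduct] at h2
    rw [dotProduct_comm]
    exact h2
  set U : Matrix (Fin D₁) (Fin D₂) ℂ := Matrix.of fun α k => bfun (Fin.castLE hD k) α with hUdef
  have hU : Uᴴ * U = 1 := by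
    ext k l
    rw [Matrix.mul_apply, Matrix.one_apply]
    have h2 := hbdot (Fin.castLE hD k) (Fin.castLE hD l)
    simp only [Fin.castLE_inj] at h2
    simpa [dotProduct, hUdef, Matrix.conjTranspose_apply, Matrix.of_apply,
      Pi.star_apply] using h2
  have hbu : ∀ k, σ k ≠ 0 → bfun (Fin.castLE hD k) = (((σ k : ℝ) : ℂ))⁻¹ • (M *ᵥ v k) := by
    intro k hk
    have hmem : (Fin.castLE hD k) ∈ s := ⟨k.isLt, hk⟩
    have h2 := hb _ hmem
    have h3 : w (Fin.castLE hD k) = uvec k := dif_pos k.isLt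
    have h4 : bfun (Fin.castLE hD k) = (WithLp.equiv 2 (Fin D₁ → ℂ)) (uvec k) := by
      rw [hbfun]
      simp only []
      rw [h2, h3]
    rw [h4, huvec]
    simp
  have hMV : M * V = U * Matrix.diagonal (fun k => ((σ k : ℝ) : ℂ)) := by
    ext α k
    rw [Matrix.mul_diagonal]
    have hL : (M * V) α k = (M *ᵥ v k) α := by
      rw [Matrix.mul_apply]
      simp [Matrix.mulVec, dotProduct, hVdef, Matrix.submatrix_apply, hvdef]
    rw [hL]
    simp only [hUdef, Matrix.of_apply]
    by_cases hk : σ k = 0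
    · rw [hMv0 k hk, hk]
      simp
    · rw [hbu k hk]
      have hne : ((σ k : ℝ) : ℂ) ≠ 0 := Complex.ofReal_ne_zero.mpr hk
      simp only [Pi.smul_apply, smul_eq_mul]
      field_simp
  have hVV : V * Vᴴ = 1 := mul_eq_one_comm.mp hV
  refine ⟨U, V, σ, ?_, hU, hV, hσanti, hσ0⟩
  calc M = M * (V * Vᴴ) := by rw [hVV, Matrix.mul_one]
    _ = (M * V) * Vᴴ := by rw [Matrix.mul_assoc]
    _ = U * Matrix.diagonal (fun k => ((σ k : ℝ) : ℂ)) * Vᴴ := by rw [hMV]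

lemma svd_min (D₁ D₂ : ℕ) (M : Matrix (Fin D₁) (Fin D₂) ℂ) :
    ∃ (U : Matrix (Fin D₁) (Fin (min D₁ D₂)) ℂ) (V : Matrix (Fin D₂) (Fin (min D₁ D₂)) ℂ)
      (σ : Fin (min D₁ D₂) → ℝ),
      M = U * Matrix.diagonal (fun k => ((σ k : ℝ) : ℂ)) * Vᴴ ∧
      Uᴴ * U = 1 ∧ Vᴴ * V = 1 ∧ Antitone σ ∧ ∀ k, 0 ≤ σ k := by
  rcases le_total D₂ D₁ with h | h
  · rw [min_eq_right h]
    exact svd_tall h M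
  · rw [min_eq_left h]
    obtain ⟨U, V, σ, hM, hU, hV, ha, h0⟩ := svd_tall h Mᴴ
    refine ⟨V, U, σ, ?_, hV, hU, ha, h0⟩
    have h2 := congrArg Matrix.conjTranspose hM
    rw [Matrix.conjTranspose_conjTranspose] at h2
    rw [h2, Matrix.conjTranspose_mul, Matrix.conjTranspose_mul,
      Matrix.conjTranspose_conjTranspose]
    have hDdiag : (Matrix.diagonal (fun k => ((σ k : ℝ) : ℂ)))ᴴ
        = Matrix.diagonal (fun k => ((σ k : ℝ) : ℂ)) := by
      have hstar : (star fun k : Fin D₁ => ((σ k : ℝ) : ℂ)) = fun k => ((σ k : ℝ) : ℂ) := by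
        funext k
        exact Complex.conj_ofReal _
      rw [Matrix.diagonal_conjTranspose, hstar]
    rw [hDdiag, Matrix.mul_assoc]

end SVDsection
/-- every t-matrix admits a tensor singular value decomposition. -/
theorem tsvd_exists (N : ℕ) (I : Fin N → ℕ) [∀ n, NeZero (I n)]
    (D₁ D₂ : ℕ) (X : Matrix (Fin D₁) (Fin D₂) (TS I)) :
    ∃ (U : Matrix (Fin D₁) (Fin (min D₁ D₂)) (TS I))
      (V : Matrix (Fin D₂) (Fin (min D₁ D₂)) (TS I))
      (lam : Fin (min D₁ D₂) → TS I),
      X = tmul U (tmul (tdiag lam) (htrans V)) ∧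
      tmul (htrans U) U = tId (min D₁ D₂) ∧
      tmul (htrans V) V = tId (min D₁ D₂) ∧
      (∀ k, TNonneg (lam k)) ∧
      (∀ k l : Fin (min D₁ D₂), k ≤ l →
        ∀ i, (tfourier (lam l) i).re ≤ (tfourier (lam k) i).re) ∧
      (∀ k, ∀ i, 0 ≤ (tfourier (lam k) i).re) := by
  classical
  choose Us Vs σs h1 h2 h3 h4 h5 using fun i : G I => svd_min D₁ D₂ (fslice X i)
  set U : Matrix (Fin D₁) (Fin (min D₁ D₂)) (TS I) := mslice Us with hUdef
  set V : Matrix (Fin D₂) (Fin (min D₁ D₂)) (TS I) := mslice Vs with hVdef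
  set lam : Fin (min D₁ D₂) → TS I :=
    fun k => tifourier (fun i => ((σs i k : ℝ) : ℂ)) with hlamdef
  have hlam : ∀ k i, tfourier (lam k) i = ((σs i k : ℝ) : ℂ) := by
    intro k i
    rw [hlamdef]
    exact congrFun (tfourier_tifourier (fun i => ((σs i k : ℝ) : ℂ))) i
  refine ⟨U, V, lam, ?_, ?_, ?_, ?_, ?_, ?_⟩
  · refine fslice_injective _ _ fun i => ?_
    rw [fslice_tmul, fslice_tmul, fslice_tdiag, fslice_htrans, hUdef, hVdef,
      fslice_mslice, fslice_mslice]
    have hd : (Matrix.diagonal (fun k => tfourier (lam k) i))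
        = Matrix.diagonal (fun k => ((σs i k : ℝ) : ℂ)) := by
      have hfun : (fun k => tfourier (lam k) i) = fun k => ((σs i k : ℝ) : ℂ) :=
        funext fun k => hlam k i
      rw [hfun]
    rw [hd, ← Matrix.mul_assoc]
    exact h1 i
  · refine fslice_injective _ _ fun i => ?_
    rw [fslice_tmul, fslice_htrans, hUdef, fslice_mslice, fslice_tId]
    exact h2 i
  · refine fslice_injective _ _ fun i => ?_
    rw [fslice_tmul, fslice_htrans, hVdef, fslice_mslice, fslice_tId]
    exact h3 i
  · intro k
    exact TNonneg_of (lam k) (fun i => σs i k) (fun i => hlam k i) (fun i => h5 i k)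
  · intro k l hkl i
    rw [hlam k i, hlam l i, Complex.ofReal_re, Complex.ofReal_re]
    exact h4 i hkl
  · intro k i
    rw [hlam k i, Complex.ofReal_re]
    exact h5 i k
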